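/- Let G be a finite simple graph with a linear order ≼ on V(G) such that u ≺ v ≺ w and uw ∈ E(G) implies uv ∈ E(G) (i.e., G is an interval graph in vertex order ≼), and suppose ω(G) ≤ k+1. Then for any spanning subgraph H of G with maximum degree Δ, the number of 4-tuples (x, v, y, w) with x ≺ v ≺ y ≺ w and xy, vw ∈ E(H) is at most k²·Δ·|V(G)|. -/

import Mathlib

open Finset

private lemma inN_card_le {V : Type*} [Fintype V] [LinearOrder V] (G : SimpleGraph V)
    [DecidableRel G.Adj]
    (hinterval : ∀ u v w : V, u < v → v < w → G.Adj u w → G.Adj u v)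
    (k : ℕ) (hω : G.cliqueNum ≤ k + 1) (v : V) :
    (univ.filter (fun u => u < v ∧ G.Adj u v)).card ≤ k := by
  set s := univ.filter (fun u => u < v ∧ G.Adj u v) with hs
  have hclique : G.IsClique (insert v s : Finset V) := by
    intro a ha b hb hab
    simp only [coe_insert, Set.mem_insert_iff, mem_coe, hs, mem_filter, mem_univ,
      true_and] at ha hb
    rcases ha with rfl | ⟨ha1, ha2⟩
    · rcases hb with rfl | ⟨hb1, hb2⟩
      · exact absurd rfl hab
      · exact hb2.symm
    · rcases hb with rfl | ⟨hb1, hb2⟩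
      · exact ha2
      · rcases lt_trichotomy a b with h | h | h
        · exact hinterval a b v h hb1 ha2
        · exact absurd h hab
        · exact (hinterval b a v h ha1 hb2).symm
  have hcard : (insert v s).card ≤ G.cliqueNum :=
    SimpleGraph.IsClique.card_le_cliqueNum (tc := hclique)
  have hvs : v ∉ s := by simp [hs]
  rw [card_insert_of_notMem hvs] at hcard
  omega

theorem stmt_10 {V : Type*} [Fintype V] [LinearOrder V] (G : SimpleGraph V)
    [DecidableRel G.Adj]
    (hinterval : ∀ u v w : V, u < v → v < w → G.Adj u w → G.Adj u v)
    (k : ℕ) (hω : G.cliqueNum ≤ k + 1)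
    (H : SimpleGraph V) [DecidableRel H.Adj] (hHG : H ≤ G)
    (Δ : ℕ) (hΔ : ∀ v : V, H.degree v ≤ Δ) :
    (Finset.univ.filter (fun t : V × V × V × V =>
        t.1 < t.2.1 ∧ t.2.1 < t.2.2.1 ∧ t.2.2.1 < t.2.2.2 ∧
        H.Adj t.1 t.2.2.1 ∧ H.Adj t.2.1 t.2.2.2)).card ≤
      k ^ 2 * Δ * Fintype.card V := by
  classical
  set S := Finset.univ.filter (fun t : V × V × V × V =>
      t.1 < t.2.1 ∧ t.2.1 < t.2.2.1 ∧ t.2.2.1 < t.2.2.2 ∧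
      H.Adj t.1 t.2.2.1 ∧ H.Adj t.2.1 t.2.2.2) with hS
  have hstep1 : S.card = ∑ y : V, (S.filter (fun t => t.2.2.1 = y)).card :=
    card_eq_sum_card_fiberwise (fun t _ => mem_univ _)
  rw [hstep1]
  have hbound : ∀ y : V, (S.filter (fun t => t.2.2.1 = y)).card ≤ k * (k * Δ) := by
    intro y
    set Sy := S.filter (fun t => t.2.2.1 = y) with hSy
    set inNy := univ.filter (fun u => u < y ∧ G.Adj u y) with hinNy
    have hmem : ∀ t ∈ Sy, t.2.1 ∈ inNy := by
      intro t ht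
      simp only [hSy, hS, mem_filter, mem_univ, true_and] at ht
      obtain ⟨⟨h1, h2, h3, h4, h5⟩, h6⟩ := ht
      subst h6
      exact mem_filter.mpr ⟨mem_univ _, h2, hinterval _ _ _ h2 h3 (hHG h5)⟩
    have hstep2 : Sy.card = ∑ v ∈ inNy, (Sy.filter (fun t => t.2.1 = v)).card :=
      card_eq_sum_card_fiberwise hmem
    rw [hstep2]
    have hinner : ∀ v ∈ inNy, (Sy.filter (fun t => t.2.1 = v)).card ≤ k * Δ := by
      intro v hv
      have hinj : (Sy.filter (fun t => t.2.1 = v)).card ≤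
          ((univ.filter (fun u => u < v ∧ G.Adj u v)) ×ˢ H.neighborFinset v).card := by
        apply card_le_card_of_injOn (fun t => (t.1, t.2.2.2))
        · intro t ht
          simp only [mem_coe, hSy, hS, mem_filter, mem_univ, true_and] at ht
          obtain ⟨⟨⟨h1, h2, h3, h4, h5⟩, h6⟩, h7⟩ := ht
          subst h6; subst h7
          refine mem_product.mpr ⟨mem_filter.mpr ⟨mem_univ _, h1,
            hinterval _ _ _ h1 h2 (hHG h4)⟩, ?_⟩
          simpa [SimpleGraph.mem_neighborFinset] using h5
        · rintro ⟨x1, v1, y1, w1⟩ ht1 ⟨x2, v2, y2, w2⟩ ht2 heq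
          simp only [mem_coe, hSy, hS, mem_filter, mem_univ, true_and] at ht1 ht2
          simp only [Prod.mk.injEq] at heq ⊢
          obtain ⟨⟨_, h16⟩, h17⟩ := ht1
          obtain ⟨⟨_, h26⟩, h27⟩ := ht2
          simp_all
      calc (Sy.filter (fun t => t.2.1 = v)).card ≤ _ := hinj
        _ = (univ.filter (fun u => u < v ∧ G.Adj u v)).card * (H.neighborFinset v).card :=
          card_product _ _
        _ ≤ k * Δ := by
          have := inN_card_le G hinterval k hω v
          have h2 : (H.neighborFinset v).card ≤ Δ := by
            rw [SimpleGraph.card_neighborFinset_eq_degree]; exact hΔ v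
          exact Nat.mul_le_mul this h2
    calc ∑ v ∈ inNy, (Sy.filter (fun t => t.2.1 = v)).card
        ≤ ∑ _v ∈ inNy, (k * Δ) := sum_le_sum hinner
      _ = inNy.card * (k * Δ) := by rw [sum_const, smul_eq_mul]
      _ ≤ k * (k * Δ) :=
          Nat.mul_le_mul_right _ (inN_card_le G hinterval k hω y)
  calc ∑ y : V, (S.filter (fun t => t.2.2.1 = y)).card
      ≤ ∑ _y : V, (k * (k * Δ)) := sum_le_sum (fun y _ => hbound y)
    _ = Fintype.card V * (k * (k * Δ)) := by rw [sum_const, smul_eq_mul, Fintype.card]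
    _ = k ^ 2 * Δ * Fintype.card V := by ring
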